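/- Let N be a natural number and p ∈ (0, 1/2). Then P(Bin(2N, p) ≥ N) ≥ P(Bin(2N+2, p) ≥ N+1), where Bin(n,p) denotes a binomial random variable with n trials and success probability p. -/

import Mathlib

/-- Tail probability of a binomial: P(Bin(n,p) ≥ m). -/
def binomTail (n m : ℕ) (p : ℝ) : ℝ :=
  ∑ k ∈ Finset.Icc m n, (n.choose k : ℝ) * p ^ k * (1 - p) ^ (n - k)

lemma binomTail_of_lt {n m : ℕ} (h : n < m) (p : ℝ) : binomTail n m p = 0 := by
  unfold binomTail
  rw [Finset.Icc_eq_empty (by omega)]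
  simp

lemma tail_succ (n m : ℕ) (p : ℝ) :
    binomTail (n + 1) (m + 1) p
      = (1 - p) * binomTail n (m + 1) p + p * binomTail n m p := by
  rcases lt_or_ge n m with h | h
  · rw [binomTail_of_lt h, binomTail_of_lt (by omega), binomTail_of_lt (by omega)]
    ring
  · unfold binomTail
    have hmap : Finset.Icc (m + 1) (n + 1) = (Finset.Icc m n).map (addRightEmbedding 1) := by
      rw [Finset.map_add_right_Icc]
    rw [hmap, Finset.sum_map]
    simp only [addRightEmbedding_apply]
    have hsplit : ∀ j ∈ Finset.Icc m n,
        ((n + 1).choose (j + 1) : ℝ) * p ^ (j + 1) * (1 - p) ^ (n + 1 - (j + 1))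
        = (n.choose (j + 1) : ℝ) * p ^ (j + 1) * (1 - p) ^ (n + 1 - (j + 1))
          + p * ((n.choose j : ℝ) * p ^ j * (1 - p) ^ (n - j)) := by
      intro j hj
      rw [Nat.choose_succ_succ]
      push_cast
      simp only [Nat.succ_eq_add_one, Nat.succ_sub_succ]
      ring
    rw [Finset.sum_congr rfl hsplit, Finset.sum_add_distrib, ← Finset.mul_sum]
    congr 1
    -- remaining: ∑ j in Icc m n, C(n,j+1) p^(j+1) q^(n+1-(j+1)) = (1-p) * ∑ k in Icc (m+1) n, ...
    have hre : ∑ j ∈ Finset.Icc m n,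
        (n.choose (j + 1) : ℝ) * p ^ (j + 1) * (1 - p) ^ (n + 1 - (j + 1))
        = ∑ k ∈ Finset.Icc (m + 1) (n + 1), (n.choose k : ℝ) * p ^ k * (1 - p) ^ (n + 1 - k) := by
      rw [hmap, Finset.sum_map]
      simp only [addRightEmbedding_apply]
    rw [hre]
    rw [Finset.sum_Icc_succ_top (by omega : m + 1 ≤ n + 1)]
    rw [Nat.choose_succ_self]
    push_cast
    rw [Finset.mul_sum]
    simp only [zero_mul, add_zero]
    apply Finset.sum_congr rfl
    intro k hk
    rw [Finset.mem_Icc] at hk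
    have hsub : n + 1 - k = (n - k) + 1 := by omega
    rw [hsub, pow_succ]
    ring

lemma tail_split (n m : ℕ) (h : m ≤ n) (p : ℝ) :
    binomTail n m p
      = (n.choose m : ℝ) * p ^ m * (1 - p) ^ (n - m) + binomTail n (m + 1) p := by
  unfold binomTail
  have hIcc : Finset.Icc m n = insert m (Finset.Icc (m + 1) n) := by
    ext k
    simp only [Finset.mem_Icc, Finset.mem_insert]
    omega
  rw [hIcc, Finset.sum_insert (by simp [Finset.mem_Icc])]

theorem stmt0 (N : ℕ) (p : ℝ) (hp0 : 0 < p) (hp : p < 1 / 2) :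
    binomTail (2 * N) N p ≥ binomTail (2 * N + 2) (N + 1) p := by
  have hq : (0 : ℝ) < 1 - p := by linarith
  have hpq : p ≤ 1 - p := by linarith
  cases N with
  | zero =>
    have h1 : binomTail 0 0 p = 1 := by simp [binomTail]
    have h2 : binomTail 2 1 p = 2 * p * (1 - p) + p ^ 2 := by
      have hIcc : Finset.Icc 1 2 = {1, 2} := rfl
      rw [binomTail, hIcc, Finset.sum_pair (by norm_num)]
      norm_num
    norm_num [h1, h2]
    nlinarith [sq_nonneg (1 - p)]
  | succ M =>
    -- canonical-index versions of the recursions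
    have t1 : binomTail (2 * M + 4) (M + 2) p
        = (1 - p) * binomTail (2 * M + 3) (M + 2) p
          + p * binomTail (2 * M + 3) (M + 1) p := by
      rw [show 2 * M + 4 = 2 * M + 3 + 1 from by omega,
          show M + 2 = M + 1 + 1 from by omega]
      exact tail_succ (2 * M + 3) (M + 1) p
    have t2 : binomTail (2 * M + 3) (M + 2) p
        = (1 - p) * binomTail (2 * M + 2) (M + 2) p
          + p * binomTail (2 * M + 2) (M + 1) p := by
      rw [show 2 * M + 3 = 2 * M + 2 + 1 from by omega,
          show M + 2 = M + 1 + 1 from by omega]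
      exact tail_succ (2 * M + 2) (M + 1) p
    have t3 : binomTail (2 * M + 3) (M + 1) p
        = (1 - p) * binomTail (2 * M + 2) (M + 1) p
          + p * binomTail (2 * M + 2) M p := by
      rw [show 2 * M + 3 = 2 * M + 2 + 1 from by omega]
      exact tail_succ (2 * M + 2) M p
    have s1 : binomTail (2 * M + 2) (M + 1) p
        = ((2 * M + 2).choose (M + 1) : ℝ) * p ^ (M + 1) * (1 - p) ^ (M + 1)
          + binomTail (2 * M + 2) (M + 2) p := by
      have := tail_split (2 * M + 2) (M + 1) (by omega) p
      rwa [show 2 * M + 2 - (M + 1) = M + 1 from by omega,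
           show M + 1 + 1 = M + 2 from by omega] at this
    have s2 : binomTail (2 * M + 2) M p
        = ((2 * M + 2).choose M : ℝ) * p ^ M * (1 - p) ^ (M + 2)
          + binomTail (2 * M + 2) (M + 1) p := by
      have := tail_split (2 * M + 2) M (by omega) p
      rwa [show 2 * M + 2 - M = M + 2 from by omega] at this
    have main : binomTail (2 * M + 4) (M + 2) p
        = binomTail (2 * M + 2) (M + 1) p
          - (1 - p) ^ 2 * (((2 * M + 2).choose (M + 1) : ℝ) * p ^ (M + 1) * (1 - p) ^ (M + 1))
          + p ^ 2 * (((2 * M + 2).choose M : ℝ) * p ^ M * (1 - p) ^ (M + 2)) := by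
      linear_combination t1 + (1 - p) * t2 + p * t3 - (1 - p) ^ 2 * s1 + p ^ 2 * s2
    have hc : (((2 * M + 2).choose M : ℕ) : ℝ) ≤ (((2 * M + 2).choose (M + 1) : ℕ) : ℝ) := by
      have h := Nat.choose_le_middle M (2 * M + 2)
      rw [show (2 * M + 2) / 2 = M + 1 from by omega] at h
      exact_mod_cast h
    have hcc : (((2 * M + 2).choose M : ℕ) : ℝ) * p
        ≤ (((2 * M + 2).choose (M + 1) : ℕ) : ℝ) * (1 - p) := by
      calc (((2 * M + 2).choose M : ℕ) : ℝ) * p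
          ≤ (((2 * M + 2).choose (M + 1) : ℕ) : ℝ) * p :=
            mul_le_mul_of_nonneg_right hc hp0.le
        _ ≤ _ := mul_le_mul_of_nonneg_left hpq (Nat.cast_nonneg _)
    have hX : (0 : ℝ) < p ^ (M + 1) * (1 - p) ^ (M + 2) := by positivity
    have key : p ^ 2 * (((2 * M + 2).choose M : ℝ) * p ^ M * (1 - p) ^ (M + 2))
        ≤ (1 - p) ^ 2 * (((2 * M + 2).choose (M + 1) : ℝ) * p ^ (M + 1) * (1 - p) ^ (M + 1)) := by
      calc p ^ 2 * (((2 * M + 2).choose M : ℝ) * p ^ M * (1 - p) ^ (M + 2))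
          = (((2 * M + 2).choose M : ℝ) * p) * (p ^ (M + 1) * (1 - p) ^ (M + 2)) := by ring
        _ ≤ (((2 * M + 2).choose (M + 1) : ℝ) * (1 - p)) * (p ^ (M + 1) * (1 - p) ^ (M + 2)) :=
            mul_le_mul_of_nonneg_right hcc hX.le
        _ = _ := by ring
    have goal' : binomTail (2 * M + 2) (M + 1) p ≥ binomTail (2 * M + 4) (M + 2) p := by
      rw [main]; linarith [key]
    rw [show 2 * (M + 1) = 2 * M + 2 from by ring]
    rw [show 2 * M + 2 + 2 = 2 * M + 4 from by omega, show M + 1 + 1 = M + 2 from by omega]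
    exact goal'
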